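/- arXiv:2308.01811 — 5 statements merged into one kernel-verified Lean document; each statement's English description precedes it below -/
import Mathlib

section
/- For any Gauss diagram G, the derivative of the writhe polynomial W_G(t) = ∑_c w(c)·t^{Ind(c)} − ∑_c w(c) vanishes at t = 1, i.e. W_G'(1) = ∑_c w(c)·Ind(c) = 0. -/
open Finset LaurentPolynomial

/-- A Gauss diagram, abstracted as a finite set of signed chords together with the
asymmetric relation `ltr d c` : "chord `d` crosses chord `c` from left to right"
(so `ltr c d` means `d` crosses `c` from right to left). -/
structure GaussDiagram where
  Chord : Type
  [instFintype : Fintype Chord]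
  [instDecEq : DecidableEq Chord]
  w : Chord → ℤ
  sign : ∀ c, w c = 1 ∨ w c = -1
  ltr : Chord → Chord → Prop
  [instDecRel : DecidableRel ltr]
  irrefl : ∀ c, ¬ ltr c c
  asymm : ∀ c d, ltr c d → ¬ ltr d c

attribute [instance] GaussDiagram.instFintype GaussDiagram.instDecEq GaussDiagram.instDecRel

/-- The chord index `Ind c = r₊(c) − r₋(c) − l₊(c) + l₋(c)`. -/
def GaussDiagram.Ind (G : GaussDiagram) (c : G.Chord) : ℤ :=
  (∑ d ∈ univ.filter (fun d => G.ltr d c), G.w d)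
    - (∑ d ∈ univ.filter (fun d => G.ltr c d), G.w d)

/-- The writhe polynomial `W_G(t) = ∑_c w(c) t^{Ind(c)} − ∑_c w(c)`. -/
noncomputable def GaussDiagram.W (G : GaussDiagram) : LaurentPolynomial ℤ :=
  (∑ c, C (G.w c) * T (G.Ind c)) - C (∑ c, G.w c)

/-- Evaluation of a Laurent polynomial at `t = 1` (the sum of its coefficients). -/
def evalOne (f : LaurentPolynomial ℤ) : ℤ := f.coeff.sum fun _ a => a

/-- Evaluation of the formal derivative of a Laurent polynomial at `t = 1`. -/
def derivOne (f : LaurentPolynomial ℤ) : ℤ := f.coeff.sum fun n a => n * a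



/-- `derivOne` as an additive monoid hom. -/
noncomputable def derivOneHom : LaurentPolynomial ℤ →+ ℤ :=
  (Finsupp.liftAddHom fun n => AddMonoidHom.mulLeft (n : ℤ)).comp
    (AddMonoidAlgebra.coeffAddEquiv : LaurentPolynomial ℤ ≃+ (ℤ →₀ ℤ)).toAddMonoidHom

lemma derivOneHom_eq (f : LaurentPolynomial ℤ) : derivOneHom f = derivOne f := by
  show (Finsupp.liftAddHom fun n => AddMonoidHom.mulLeft (n : ℤ)) f.coeff = _
  rw [Finsupp.liftAddHom_apply]
  rfl

lemma derivOneHom_single (n a : ℤ) : derivOneHom (C a * T n) = n * a := by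
  rw [← LaurentPolynomial.single_eq_C_mul_T]
  show (Finsupp.liftAddHom fun n => AddMonoidHom.mulLeft (n : ℤ)) (Finsupp.single n a) = n * a
  simpa using Finsupp.liftAddHom_apply_single (fun n => AddMonoidHom.mulLeft (n : ℤ)) n a

/-- The formal derivative of the writhe polynomial vanishes at `t = 1`:
`W_G'(1) = ∑_c w(c)·Ind(c) = 0`. -/
theorem writhePolynomial_deriv_one (G : GaussDiagram) :
    derivOne G.W = ∑ c, G.w c * G.Ind c ∧ derivOne G.W = 0 := by
  have h1 : derivOne G.W = ∑ c, G.w c * G.Ind c := by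
    rw [← derivOneHom_eq, GaussDiagram.W, map_sub, map_sum]
    have hC : derivOneHom (C (∑ c, G.w c)) = 0 := by
      have := derivOneHom_single 0 (∑ c, G.w c)
      simpa using this
    rw [hC, sub_zero]
    simp only [derivOneHom_single]
    exact Finset.sum_congr rfl fun c _ => mul_comm _ _
  refine ⟨h1, h1.trans ?_⟩
  have expand : ∑ c, G.w c * G.Ind c
      = (∑ c, ∑ d ∈ univ.filter (fun d => G.ltr d c), G.w c * G.w d)
        - (∑ c, ∑ d ∈ univ.filter (fun d => G.ltr c d), G.w c * G.w d) := by
    rw [← Finset.sum_sub_distrib]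
    refine Finset.sum_congr rfl fun c _ => ?_
    rw [GaussDiagram.Ind, mul_sub, Finset.mul_sum, Finset.mul_sum]
  have key : (∑ c, ∑ d ∈ univ.filter (fun d => G.ltr d c), G.w c * G.w d)
           = (∑ c, ∑ d ∈ univ.filter (fun d => G.ltr c d), G.w c * G.w d) := by
    simp only [Finset.sum_filter]
    rw [Finset.sum_comm]
    exact Finset.sum_congr rfl fun c _ => Finset.sum_congr rfl fun d _ => by
      by_cases h : G.ltr c d <;> simp [h, mul_comm]
  rw [expand, key, sub_self]
end

section
/- If a chord c in a Gauss diagram G is isolated (intersects no other chord), then Ind(c) = 0, and removing c from G leaves the index of every other chord unchanged; consequently the writhe polynomial of G equals that of G with c removed. -/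
open Finset LaurentPolynomial

/-- Deletion of a chord from a Gauss diagram. -/
def GaussDiagram.delete (G : GaussDiagram) (c : G.Chord) : GaussDiagram where
  Chord := {d : G.Chord // d ≠ c}
  w d := G.w d.val
  sign d := G.sign d.val
  ltr d e := G.ltr d.val e.val
  irrefl d := G.irrefl d.val
  asymm d e := G.asymm d.val e.val

/-- Summing over the subtype of elements different from `c` drops the `c` term. -/
lemma sum_subtype_ne {α M : Type*} [Fintype α] [DecidableEq α] [AddCommGroup M]
    (c : α) (g : α → M) : ∑ d : {d : α // d ≠ c}, g d.val = (∑ d, g d) - g c := by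
  rw [eq_sub_iff_add_eq, ← Finset.sum_subtype (univ.filter (· ≠ c)) (by simp) g,
    Finset.filter_ne', Finset.sum_erase_add _ _ (mem_univ c)]

/-- If a chord `c` is isolated (intersects no other chord), then `Ind(c) = 0`, removing `c`
leaves the index of every other chord unchanged, and the writhe polynomial is unchanged. -/
theorem writhePolynomial_delete_isolated (G : GaussDiagram) (c : G.Chord)
    (hiso : ∀ d, ¬ G.ltr d c ∧ ¬ G.ltr c d) :
    G.Ind c = 0 ∧
    (∀ d : (G.delete c).Chord, (G.delete c).Ind d = G.Ind d.val) ∧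
    (G.delete c).W = G.W := by
  have hInd0 : G.Ind c = 0 := by
    simp [GaussDiagram.Ind, Finset.filter_eq_empty_iff.2 (fun d _ => (hiso d).1),
      Finset.filter_eq_empty_iff.2 (fun d _ => (hiso d).2)]
  have hInd : ∀ d : (G.delete c).Chord, (G.delete c).Ind d = G.Ind d.val := by
    intro d
    unfold GaussDiagram.Ind GaussDiagram.delete
    simp only [Finset.sum_filter]
    rw [sum_subtype_ne c (fun x => if G.ltr x d.val then G.w x else 0),
      sum_subtype_ne c (fun x => if G.ltr d.val x then G.w x else 0)]
    simp [(hiso d.val).1, (hiso d.val).2]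
  refine ⟨hInd0, hInd, ?_⟩
  unfold GaussDiagram.W
  have h1 : ∑ d : (G.delete c).Chord, C ((G.delete c).w d) * T ((G.delete c).Ind d)
      = (∑ d, C (G.w d) * T (G.Ind d)) - C (G.w c) * T (G.Ind c) := by
    calc ∑ d : (G.delete c).Chord, C ((G.delete c).w d) * T ((G.delete c).Ind d)
        = ∑ d : {d : G.Chord // d ≠ c}, C (G.w d.val) * T (G.Ind d.val) := by
          apply Finset.sum_congr rfl; intro d _; rw [hInd d]; rfl
      _ = _ := sum_subtype_ne c (fun x => C (G.w x) * T (G.Ind x))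
  have h2 : (∑ d : (G.delete c).Chord, (G.delete c).w d) = (∑ d, G.w d) - G.w c :=
    sum_subtype_ne c G.w
  rw [h1, h2, hInd0, T_zero, mul_one, map_sub]
  ring
end

section
/- Suppose a Gauss diagram G' is obtained from G by adding two parallel chords c₊, c₋ with opposite signs, adjacent endpoints (so that c₊ and c₋ do not intersect each other and every other chord intersects c₊ if and only if it intersects c₋, in the same direction). Then W_{G'}(t) = W_G(t): the writhe polynomial is invariant under the second Reidemeister move. -/
open Finset LaurentPolynomial

/-- Deletion of two chords from a Gauss diagram. -/
def GaussDiagram.delete2 (G : GaussDiagram) (c₁ c₂ : G.Chord) : GaussDiagram where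
  Chord := {d : G.Chord // d ≠ c₁ ∧ d ≠ c₂}
  w d := G.w d.val
  sign d := G.sign d.val
  ltr d e := G.ltr d.val e.val
  irrefl d := G.irrefl d.val
  asymm d e := G.asymm d.val e.val

/-- Second Reidemeister move: if `G'` contains two parallel chords `cp`, `cm` with opposite
signs and adjacent endpoints (so they do not intersect each other and every other chord
intersects `cp` iff it intersects `cm`, in the same direction), then their contributions
cancel, the indices of all other chords are unchanged, the writhe is unchanged, and
the writhe polynomial of `G'` equals that of `G'` with `cp, cm` removed. -/
theorem writhePolynomial_reidemeister_two (G' : GaussDiagram) (cp cm : G'.Chord)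
    (hne : cp ≠ cm) (hsign : G'.w cp = - G'.w cm)
    (hcross1 : ¬ G'.ltr cp cm) (hcross2 : ¬ G'.ltr cm cp)
    (hpar : ∀ d, d ≠ cp → d ≠ cm →
      ((G'.ltr d cp ↔ G'.ltr d cm) ∧ (G'.ltr cp d ↔ G'.ltr cm d))) :
    C (G'.w cp) * T (G'.Ind cp) + C (G'.w cm) * T (G'.Ind cm) = 0 ∧
    (∀ d : (G'.delete2 cp cm).Chord, (G'.delete2 cp cm).Ind d = G'.Ind d.val) ∧
    (∑ d : (G'.delete2 cp cm).Chord, (G'.delete2 cp cm).w d = ∑ d, G'.w d) ∧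
    (G'.delete2 cp cm).W = G'.W := by
  classical
  set S := {d : G'.Chord // d ≠ cp ∧ d ≠ cm}
  -- splitting lemma
  have split : ∀ {M : Type} [inst : AddCommMonoid M] (F : G'.Chord → M),
      ∑ e, F e = (∑ e : S, F e.val) + (F cp + F cm) := by
    intro M inst F
    have h1 : (∑ e : S, F e.val) =
        ∑ e ∈ univ.filter (fun x => x ≠ cp ∧ x ≠ cm), F e :=
      (Finset.sum_subtype _ (by simp) F).symm
    have h2 : univ.filter (fun x : G'.Chord => ¬(x ≠ cp ∧ x ≠ cm)) = {cp, cm} := by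
      ext x
      simp only [Finset.mem_filter, Finset.mem_univ, true_and, not_and_or, not_not,
        Finset.mem_insert, Finset.mem_singleton]
    rw [h1, ← Finset.sum_filter_add_sum_filter_not univ (fun x => x ≠ cp ∧ x ≠ cm) F,
      h2, Finset.sum_pair hne]
  have hw : G'.w cp + G'.w cm = 0 := by rw [hsign]; ring
  -- Ind cp = Ind cm
  have hInd : G'.Ind cp = G'.Ind cm := by
    unfold GaussDiagram.Ind
    congr 1
    · apply Finset.sum_congr _ (fun _ _ => rfl)
      ext e
      simp only [Finset.mem_filter, Finset.mem_univ, true_and]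
      by_cases h1 : e = cp
      · subst h1
        exact ⟨fun h => absurd h (G'.irrefl _), fun h => absurd h hcross1⟩
      by_cases h2 : e = cm
      · subst h2
        exact ⟨fun h => absurd h hcross2, fun h => absurd h (G'.irrefl _)⟩
      · exact (hpar e h1 h2).1
    · apply Finset.sum_congr _ (fun _ _ => rfl)
      ext e
      simp only [Finset.mem_filter, Finset.mem_univ, true_and]
      by_cases h1 : e = cp
      · subst h1
        exact ⟨fun h => absurd h (G'.irrefl _), fun h => absurd h hcross2⟩
      by_cases h2 : e = cm
      · subst h2
        exact ⟨fun h => absurd h hcross1, fun h => absurd h (G'.irrefl _)⟩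
      · exact (hpar e h1 h2).2
  have hcancel : C (G'.w cp) * T (G'.Ind cp) + C (G'.w cm) * T (G'.Ind cm) = 0 := by
    rw [hInd, hsign, map_neg]; ring
  -- Ind invariance
  have hIndEq : ∀ d : (G'.delete2 cp cm).Chord,
      (G'.delete2 cp cm).Ind d = G'.Ind d.val := by
    intro d
    unfold GaussDiagram.Ind
    have e1 : (∑ e ∈ univ.filter (fun e : S => G'.ltr e.val d.val), G'.w e.val)
        = ∑ e : S, if G'.ltr e.val d.val then G'.w e.val else 0 := by
      rw [Finset.sum_filter]
    have e2 : (∑ e ∈ univ.filter (fun e : S => G'.ltr d.val e.val), G'.w e.val)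
        = ∑ e : S, if G'.ltr d.val e.val then G'.w e.val else 0 := by
      rw [Finset.sum_filter]
    have e3 : (∑ e ∈ univ.filter (fun e : G'.Chord => G'.ltr e d.val), G'.w e)
        = ∑ e : G'.Chord, if G'.ltr e d.val then G'.w e else 0 := by
      rw [Finset.sum_filter]
    have e4 : (∑ e ∈ univ.filter (fun e : G'.Chord => G'.ltr d.val e), G'.w e)
        = ∑ e : G'.Chord, if G'.ltr d.val e then G'.w e else 0 := by
      rw [Finset.sum_filter]
    show (∑ e ∈ univ.filter (fun e : S => G'.ltr e.val d.val), G'.w e.val)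
        - (∑ e ∈ univ.filter (fun e : S => G'.ltr d.val e.val), G'.w e.val) = _
    rw [e1, e2, e3, e4,
      split (fun e => if G'.ltr e d.val then G'.w e else 0),
      split (fun e => if G'.ltr d.val e then G'.w e else 0)]
    have hp := hpar d.val d.2.1 d.2.2
    have c1 : ((if G'.ltr cp d.val then G'.w cp else 0)
        + (if G'.ltr cm d.val then G'.w cm else 0)) = 0 := by
      by_cases h : G'.ltr cp d.val
      · rw [if_pos h, if_pos (hp.2.mp h)]; exact hw
      · rw [if_neg h, if_neg (fun h' => h (hp.2.mpr h'))]; ring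
    have c2 : ((if G'.ltr d.val cp then G'.w cp else 0)
        + (if G'.ltr d.val cm then G'.w cm else 0)) = 0 := by
      by_cases h : G'.ltr d.val cp
      · rw [if_pos h, if_pos (hp.1.mp h)]; exact hw
      · rw [if_neg h, if_neg (fun h' => h (hp.1.mpr h'))]; ring
    rw [c1, c2]; ring
  -- writhe invariance
  have hwsum : (∑ d : (G'.delete2 cp cm).Chord, (G'.delete2 cp cm).w d = ∑ d, G'.w d) := by
    show (∑ d : S, G'.w d.val) = _
    rw [split G'.w, hw, add_zero]
  refine ⟨hcancel, hIndEq, hwsum, ?_⟩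
  unfold GaussDiagram.W
  rw [hwsum]
  congr 1
  have : (∑ c : (G'.delete2 cp cm).Chord,
      C ((G'.delete2 cp cm).w c) * T ((G'.delete2 cp cm).Ind c))
      = ∑ c : S, C (G'.w c.val) * T (G'.Ind c.val) := by
    apply Finset.sum_congr rfl
    intro c _
    rw [hIndEq c]; rfl
  rw [this, split (fun c => C (G'.w c) * T (G'.Ind c)), hcancel, add_zero]
end

section
/- Let Γ be a finite signed directed multigraph containing two vertices v₊, v₋ with w(v₊) = +1, w(v₋) = −1, not joined to each other, such that there is a bijection between the edges incident to v₊ and those incident to v₋ preserving the other endpoint and the direction (toward/away). Let Γ' be Γ with v₊, v₋ and all their incident edges deleted. Then P_{Γ'}(t) = P_Γ(t), where P_Γ(t) = ∑_v w(v) t^{Ind(v)} − ∑_v w(v). -/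
open Finset LaurentPolynomial

/-- A finite directed multigraph with vertex signs `w : V → {+1, −1}`. -/
structure SDGraph where
  V : Type
  [instFintypeV : Fintype V]
  [instDecEqV : DecidableEq V]
  E : Type
  [instFintypeE : Fintype E]
  src : E → V
  tgt : E → V
  w : V → ℤ
  sign : ∀ v, w v = 1 ∨ w v = -1

attribute [instance] SDGraph.instFintypeV SDGraph.instDecEqV SDGraph.instFintypeE

/-- The index of a vertex:
`Ind(v) = ∑_{edges u→v} w(u) − ∑_{edges v→u} w(u)` (sums over edges, with multiplicity). -/
def SDGraph.Ind (G : SDGraph) (v : G.V) : ℤ :=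
  (∑ e ∈ univ.filter (fun e => G.tgt e = v), G.w (G.src e))
    - (∑ e ∈ univ.filter (fun e => G.src e = v), G.w (G.tgt e))

/-- The graph polynomial `P_Γ(t) = ∑_v w(v) t^{Ind(v)} − ∑_v w(v)`. -/
noncomputable def SDGraph.P (G : SDGraph) : LaurentPolynomial ℤ :=
  (∑ v, C (G.w v) * T (G.Ind v)) - C (∑ v, G.w v)

/-- Deleting two vertices and all edges incident to them. -/
def SDGraph.deletePair (G : SDGraph) (a b : G.V) : SDGraph where
  V := {u : G.V // u ≠ a ∧ u ≠ b}
  E := {e : G.E // G.src e ≠ a ∧ G.src e ≠ b ∧ G.tgt e ≠ a ∧ G.tgt e ≠ b}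
  src e := ⟨G.src e.val, e.prop.1, e.prop.2.1⟩
  tgt e := ⟨G.tgt e.val, e.prop.2.2.1, e.prop.2.2.2⟩
  w u := G.w u.val
  sign u := G.sign u.val

/-- The edges incident to a vertex. -/
def SDGraph.Inc (G : SDGraph) (v : G.V) : Type := {e : G.E // G.src e = v ∨ G.tgt e = v}

section Omega2Aux

variable {G : SDGraph}

/-- Restrict an equivalence of edge subtypes that preserves a map `r` to the fibers of `r`. -/
def SDGraph.restrictEquiv {p q : G.E → Prop} (ψ : {e : G.E // p e} ≃ {e : G.E // q e})
    (r : G.E → G.V) (hr : ∀ e, r (ψ e).val = r e.val) (u : G.V) :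
    {e : G.E // p e ∧ r e = u} ≃ {e : G.E // q e ∧ r e = u} where
  toFun e := ⟨(ψ ⟨e.val, e.prop.1⟩).val, (ψ ⟨e.val, e.prop.1⟩).prop,
    (hr ⟨e.val, e.prop.1⟩).trans e.prop.2⟩
  invFun f := ⟨(ψ.symm ⟨f.val, f.prop.1⟩).val, (ψ.symm ⟨f.val, f.prop.1⟩).prop, by
    have h := hr (ψ.symm ⟨f.val, f.prop.1⟩)
    rw [Equiv.apply_symm_apply] at h
    exact h.symm.trans f.prop.2⟩
  left_inv e := by
    apply Subtype.ext
    dsimp only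
    rw [Subtype.coe_eta, Equiv.symm_apply_apply]
  right_inv f := by
    apply Subtype.ext
    dsimp only
    rw [Subtype.coe_eta, Equiv.apply_symm_apply]

end Omega2Aux

/-- The move `ω₂`: if `v₊, v₋` are vertices with `w(v₊) = +1`, `w(v₋) = −1`, not joined to
each other, and there is a bijection between the edges incident to `v₊` and those incident
to `v₋` preserving the other endpoint and the direction, then deleting `v₊, v₋` and all
their incident edges leaves the graph polynomial unchanged. -/
theorem graphPolynomial_omega_two (G : SDGraph) (vp vm : G.V) (hne : vp ≠ vm)
    (hwp : G.w vp = 1) (hwm : G.w vm = -1)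
    (hsep : ∀ e, ¬ ((G.src e = vp ∧ G.tgt e = vm) ∨ (G.src e = vm ∧ G.tgt e = vp)))
    (φ : G.Inc vp ≃ G.Inc vm)
    (hφ : ∀ e : G.Inc vp,
      (G.src e.val = vp → G.src (φ e).val = vm ∧ G.tgt (φ e).val = G.tgt e.val) ∧
      (G.tgt e.val = vp → G.tgt (φ e).val = vm ∧ G.src (φ e).val = G.src e.val)) :
    (G.deletePair vp vm).P = G.P := by
  classical
  set G' := G.deletePair vp vm with hG'
  -- The equivalence between in-edges of `vp` and in-edges of `vm`, preserving sources.
  have ψin_def : ∃ ψ : {e : G.E // G.tgt e = vp} ≃ {e : G.E // G.tgt e = vm},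
      ∀ e, G.src (ψ e).val = G.src e.val := by
    refine ⟨⟨fun e => ⟨(φ ⟨e.val, Or.inr e.prop⟩).val, ((hφ ⟨e.val, Or.inr e.prop⟩).2 e.prop).1⟩,
      fun f => ⟨(φ.symm ⟨f.val, Or.inr f.prop⟩).val, ?_⟩, ?_, ?_⟩, ?_⟩
    · -- tgt of the preimage is vp
      set x := φ.symm ⟨f.val, Or.inr f.prop⟩ with hx
      rcases x.prop with h | h
      · exfalso
        have h1 := (hφ x).1 h
        have h2 : φ x = ⟨f.val, Or.inr f.prop⟩ := Equiv.apply_symm_apply φ _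
        rw [h2] at h1
        exact hsep x.val (Or.inl ⟨h, h1.2.symm.trans f.prop⟩)
      · exact h
    · intro e
      apply Subtype.ext
      dsimp only
      exact congrArg Subtype.val (φ.symm_apply_apply ⟨e.val, Or.inr e.prop⟩)
    · intro f
      apply Subtype.ext
      dsimp only
      exact congrArg Subtype.val (φ.apply_symm_apply ⟨f.val, Or.inr f.prop⟩)
    · intro e
      exact ((hφ ⟨e.val, Or.inr e.prop⟩).2 e.prop).2
  obtain ⟨ψin, hψin⟩ := ψin_def
  -- The equivalence between out-edges of `vp` and out-edges of `vm`, preserving targets.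
  have ψout_def : ∃ ψ : {e : G.E // G.src e = vp} ≃ {e : G.E // G.src e = vm},
      ∀ e, G.tgt (ψ e).val = G.tgt e.val := by
    refine ⟨⟨fun e => ⟨(φ ⟨e.val, Or.inl e.prop⟩).val, ((hφ ⟨e.val, Or.inl e.prop⟩).1 e.prop).1⟩,
      fun f => ⟨(φ.symm ⟨f.val, Or.inl f.prop⟩).val, ?_⟩, ?_, ?_⟩, ?_⟩
    · set x := φ.symm ⟨f.val, Or.inl f.prop⟩ with hx
      rcases x.prop with h | h
      · exact h
      · exfalso
        have h1 := (hφ x).2 h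
        have h2 : φ x = ⟨f.val, Or.inl f.prop⟩ := Equiv.apply_symm_apply φ _
        rw [h2] at h1
        exact hsep x.val (Or.inr ⟨h1.2.symm.trans f.prop, h⟩)
    · intro e
      apply Subtype.ext
      dsimp only
      exact congrArg Subtype.val (φ.symm_apply_apply ⟨e.val, Or.inl e.prop⟩)
    · intro f
      apply Subtype.ext
      dsimp only
      exact congrArg Subtype.val (φ.apply_symm_apply ⟨f.val, Or.inl f.prop⟩)
    · intro e
      exact ((hφ ⟨e.val, Or.inl e.prop⟩).1 e.prop).2
  obtain ⟨ψout, hψout⟩ := ψout_def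
  -- Ind(vp) = Ind(vm)
  have hInd : G.Ind vp = G.Ind vm := by
    unfold SDGraph.Ind
    congr 1
    · rw [Finset.sum_subtype (p := fun e => G.tgt e = vp) (univ.filter (fun e => G.tgt e = vp))
        (by simp) (fun e => G.w (G.src e)),
        Finset.sum_subtype (p := fun e => G.tgt e = vm) (univ.filter (fun e => G.tgt e = vm))
        (by simp) (fun e => G.w (G.src e))]
      exact Fintype.sum_equiv ψin (fun e => G.w (G.src e.val)) (fun e => G.w (G.src e.val))
        (fun e => by rw [hψin])
    · rw [Finset.sum_subtype (p := fun e => G.src e = vp) (univ.filter (fun e => G.src e = vp))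
        (by simp) (fun e => G.w (G.tgt e)),
        Finset.sum_subtype (p := fun e => G.src e = vm) (univ.filter (fun e => G.src e = vm))
        (by simp) (fun e => G.w (G.tgt e))]
      exact Fintype.sum_equiv ψout (fun e => G.w (G.tgt e.val)) (fun e => G.w (G.tgt e.val))
        (fun e => by rw [hψout])
  -- card equalities for the fibers
  have keyIn : ∀ u : G.V, (univ.filter (fun e => G.tgt e = u ∧ G.src e = vp)).card
      = (univ.filter (fun e => G.tgt e = u ∧ G.src e = vm)).card := by
    intro u
    have h1 : (univ.filter (fun e => G.tgt e = u ∧ G.src e = vp))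
        = (univ.filter (fun e => G.src e = vp ∧ G.tgt e = u)) := by
      ext e; simp [and_comm]
    have h2 : (univ.filter (fun e => G.tgt e = u ∧ G.src e = vm))
        = (univ.filter (fun e => G.src e = vm ∧ G.tgt e = u)) := by
      ext e; simp [and_comm]
    rw [h1, h2, ← Fintype.card_subtype, ← Fintype.card_subtype]
    exact Fintype.card_congr (SDGraph.restrictEquiv ψout G.tgt hψout u)
  have keyOut : ∀ u : G.V, (univ.filter (fun e => G.src e = u ∧ G.tgt e = vp)).card
      = (univ.filter (fun e => G.src e = u ∧ G.tgt e = vm)).card := by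
    intro u
    have h1 : (univ.filter (fun e => G.src e = u ∧ G.tgt e = vp))
        = (univ.filter (fun e => G.tgt e = vp ∧ G.src e = u)) := by
      ext e; simp [and_comm]
    have h2 : (univ.filter (fun e => G.src e = u ∧ G.tgt e = vm))
        = (univ.filter (fun e => G.tgt e = vm ∧ G.src e = u)) := by
      ext e; simp [and_comm]
    rw [h1, h2, ← Fintype.card_subtype, ← Fintype.card_subtype]
    exact Fintype.card_congr (SDGraph.restrictEquiv ψin G.src hψin u)
  -- cancellation: sums over edges touching vp/vm at the far endpoint vanish
  have cancelIn : ∀ u : G.V,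
      ∑ e ∈ univ.filter (fun e => G.tgt e = u ∧ (G.src e = vp ∨ G.src e = vm)),
        G.w (G.src e) = 0 := by
    intro u
    have hsplit : (univ.filter (fun e => G.tgt e = u ∧ (G.src e = vp ∨ G.src e = vm)))
        = (univ.filter (fun e => G.tgt e = u ∧ G.src e = vp))
          ∪ (univ.filter (fun e => G.tgt e = u ∧ G.src e = vm)) := by
      ext e; simp; tauto
    have hdisj : Disjoint (univ.filter (fun e => G.tgt e = u ∧ G.src e = vp))
        (univ.filter (fun e => G.tgt e = u ∧ G.src e = vm)) := by
      rw [Finset.disjoint_left]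
      intro e h1 h2
      simp only [mem_filter, mem_univ, true_and] at h1 h2
      exact hne (h1.2.symm.trans h2.2)
    rw [hsplit, Finset.sum_union hdisj]
    have s1 : ∑ e ∈ univ.filter (fun e => G.tgt e = u ∧ G.src e = vp), G.w (G.src e)
        = ((univ.filter (fun e => G.tgt e = u ∧ G.src e = vp)).card : ℤ) := by
      have hc : ∀ e ∈ univ.filter (fun e => G.tgt e = u ∧ G.src e = vp), G.w (G.src e) = (1 : ℤ) :=
        fun e he => by rw [(Finset.mem_filter.mp he).2.2, hwp]
      rw [Finset.sum_congr rfl hc]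
      simp
    have s2 : ∑ e ∈ univ.filter (fun e => G.tgt e = u ∧ G.src e = vm), G.w (G.src e)
        = -((univ.filter (fun e => G.tgt e = u ∧ G.src e = vm)).card : ℤ) := by
      have hc : ∀ e ∈ univ.filter (fun e => G.tgt e = u ∧ G.src e = vm), G.w (G.src e) = (-1 : ℤ) :=
        fun e he => by rw [(Finset.mem_filter.mp he).2.2, hwm]
      rw [Finset.sum_congr rfl hc]
      simp
    rw [s1, s2, keyIn u]
    ring
  have cancelOut : ∀ u : G.V,
      ∑ e ∈ univ.filter (fun e => G.src e = u ∧ (G.tgt e = vp ∨ G.tgt e = vm)),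
        G.w (G.tgt e) = 0 := by
    intro u
    have hsplit : (univ.filter (fun e => G.src e = u ∧ (G.tgt e = vp ∨ G.tgt e = vm)))
        = (univ.filter (fun e => G.src e = u ∧ G.tgt e = vp))
          ∪ (univ.filter (fun e => G.src e = u ∧ G.tgt e = vm)) := by
      ext e; simp; tauto
    have hdisj : Disjoint (univ.filter (fun e => G.src e = u ∧ G.tgt e = vp))
        (univ.filter (fun e => G.src e = u ∧ G.tgt e = vm)) := by
      rw [Finset.disjoint_left]
      intro e h1 h2
      simp only [mem_filter, mem_univ, true_and] at h1 h2
      exact hne (h1.2.symm.trans h2.2)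
    rw [hsplit, Finset.sum_union hdisj]
    have s1 : ∑ e ∈ univ.filter (fun e => G.src e = u ∧ G.tgt e = vp), G.w (G.tgt e)
        = ((univ.filter (fun e => G.src e = u ∧ G.tgt e = vp)).card : ℤ) := by
      have hc : ∀ e ∈ univ.filter (fun e => G.src e = u ∧ G.tgt e = vp), G.w (G.tgt e) = (1 : ℤ) :=
        fun e he => by rw [(Finset.mem_filter.mp he).2.2, hwp]
      rw [Finset.sum_congr rfl hc]
      simp
    have s2 : ∑ e ∈ univ.filter (fun e => G.src e = u ∧ G.tgt e = vm), G.w (G.tgt e)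
        = -((univ.filter (fun e => G.src e = u ∧ G.tgt e = vm)).card : ℤ) := by
      have hc : ∀ e ∈ univ.filter (fun e => G.src e = u ∧ G.tgt e = vm), G.w (G.tgt e) = (-1 : ℤ) :=
        fun e he => by rw [(Finset.mem_filter.mp he).2.2, hwm]
      rw [Finset.sum_congr rfl hc]
      simp
    rw [s1, s2, keyOut u]
    ring
  -- The index of a surviving vertex is unchanged.
  have hIndEq : ∀ v' : G'.V, G'.Ind v' = G.Ind v'.val := by
    intro v'
    obtain ⟨u, hu1, hu2⟩ := v'
    unfold SDGraph.Ind
    have hin : ∑ e ∈ univ.filter (fun e => G'.tgt e = (⟨u, hu1, hu2⟩ : G'.V)),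
        G'.w (G'.src e)
        = ∑ e ∈ univ.filter (fun e => G.tgt e = u), G.w (G.src e) := by
      -- first convert the subtype sum to a sum over G.E
      have step1 : ∑ e ∈ univ.filter (fun e => G'.tgt e = (⟨u, hu1, hu2⟩ : G'.V)),
          G'.w (G'.src e)
          = ∑ e ∈ univ.filter (fun e : G.E =>
              (G.src e ≠ vp ∧ G.src e ≠ vm ∧ G.tgt e ≠ vp ∧ G.tgt e ≠ vm) ∧ G.tgt e = u),
              G.w (G.src e) := by
        refine Finset.sum_bij' (fun e _ => e.val)
          (fun e he => ⟨e, ((Finset.mem_filter.mp he).2).1⟩) ?_ ?_ ?_ ?_ ?_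
        · intro e he
          simp only [Finset.mem_filter, Finset.mem_univ, true_and] at he ⊢
          exact ⟨e.prop, congrArg Subtype.val he⟩
        · intro e he
          simp only [Finset.mem_filter, Finset.mem_univ, true_and] at he ⊢
          exact Finset.mem_filter.mpr ⟨Finset.mem_univ _, Subtype.ext (p := fun x : G.V => x ≠ vp ∧ x ≠ vm) (a1 := ⟨G.tgt e, he.1.2.2.1, he.1.2.2.2⟩) (a2 := ⟨u, hu1, hu2⟩) he.2⟩
        · intro e _
          rfl
        · intro e _
          rfl
        · intro e _
          rfl
      rw [step1]
      -- now split the big sum over G.E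
      have hset : (univ.filter (fun e : G.E => G.tgt e = u))
          = (univ.filter (fun e : G.E =>
              (G.src e ≠ vp ∧ G.src e ≠ vm ∧ G.tgt e ≠ vp ∧ G.tgt e ≠ vm) ∧ G.tgt e = u))
            ∪ (univ.filter (fun e : G.E => G.tgt e = u ∧ (G.src e = vp ∨ G.src e = vm))) := by
        ext e
        simp only [Finset.mem_filter, Finset.mem_univ, true_and, Finset.mem_union]
        constructor
        · intro h
          by_cases h1 : G.src e = vp
          · exact Or.inr ⟨h, Or.inl h1⟩
          · by_cases h2 : G.src e = vm
            · exact Or.inr ⟨h, Or.inr h2⟩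
            · exact Or.inl ⟨⟨h1, h2, by rw [h]; exact hu1, by rw [h]; exact hu2⟩, h⟩
        · rintro (⟨_, h⟩ | ⟨h, _⟩) <;> exact h
      have hdisj : Disjoint (univ.filter (fun e : G.E =>
              (G.src e ≠ vp ∧ G.src e ≠ vm ∧ G.tgt e ≠ vp ∧ G.tgt e ≠ vm) ∧ G.tgt e = u))
          (univ.filter (fun e : G.E => G.tgt e = u ∧ (G.src e = vp ∨ G.src e = vm))) := by
        rw [Finset.disjoint_left]
        intro e h1 h2
        simp only [Finset.mem_filter, Finset.mem_univ, true_and] at h1 h2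
        rcases h2.2 with h | h
        · exact h1.1.1 h
        · exact h1.1.2.1 h
      rw [hset, Finset.sum_union hdisj, cancelIn u, add_zero]
    have hout : ∑ e ∈ univ.filter (fun e => G'.src e = (⟨u, hu1, hu2⟩ : G'.V)),
        G'.w (G'.tgt e)
        = ∑ e ∈ univ.filter (fun e => G.src e = u), G.w (G.tgt e) := by
      have step1 : ∑ e ∈ univ.filter (fun e => G'.src e = (⟨u, hu1, hu2⟩ : G'.V)),
          G'.w (G'.tgt e)
          = ∑ e ∈ univ.filter (fun e : G.E =>
              (G.src e ≠ vp ∧ G.src e ≠ vm ∧ G.tgt e ≠ vp ∧ G.tgt e ≠ vm) ∧ G.src e = u),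
              G.w (G.tgt e) := by
        refine Finset.sum_bij' (fun e _ => e.val)
          (fun e he => ⟨e, ((Finset.mem_filter.mp he).2).1⟩) ?_ ?_ ?_ ?_ ?_
        · intro e he
          simp only [Finset.mem_filter, Finset.mem_univ, true_and] at he ⊢
          exact ⟨e.prop, congrArg Subtype.val he⟩
        · intro e he
          simp only [Finset.mem_filter, Finset.mem_univ, true_and] at he ⊢
          exact Finset.mem_filter.mpr ⟨Finset.mem_univ _, Subtype.ext (p := fun x : G.V => x ≠ vp ∧ x ≠ vm) (a1 := ⟨G.src e, he.1.1, he.1.2.1⟩) (a2 := ⟨u, hu1, hu2⟩) he.2⟩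
        · intro e _
          rfl
        · intro e _
          rfl
        · intro e _
          rfl
      rw [step1]
      have hset : (univ.filter (fun e : G.E => G.src e = u))
          = (univ.filter (fun e : G.E =>
              (G.src e ≠ vp ∧ G.src e ≠ vm ∧ G.tgt e ≠ vp ∧ G.tgt e ≠ vm) ∧ G.src e = u))
            ∪ (univ.filter (fun e : G.E => G.src e = u ∧ (G.tgt e = vp ∨ G.tgt e = vm))) := by
        ext e
        simp only [Finset.mem_filter, Finset.mem_univ, true_and, Finset.mem_union]
        constructor
        · intro h
          by_cases h1 : G.tgt e = vp
          · exact Or.inr ⟨h, Or.inl h1⟩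
          · by_cases h2 : G.tgt e = vm
            · exact Or.inr ⟨h, Or.inr h2⟩
            · exact Or.inl ⟨⟨by rw [h]; exact hu1, by rw [h]; exact hu2, h1, h2⟩, h⟩
        · rintro (⟨_, h⟩ | ⟨h, _⟩) <;> exact h
      have hdisj : Disjoint (univ.filter (fun e : G.E =>
              (G.src e ≠ vp ∧ G.src e ≠ vm ∧ G.tgt e ≠ vp ∧ G.tgt e ≠ vm) ∧ G.src e = u))
          (univ.filter (fun e : G.E => G.src e = u ∧ (G.tgt e = vp ∨ G.tgt e = vm))) := by
        rw [Finset.disjoint_left]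
        intro e h1 h2
        simp only [Finset.mem_filter, Finset.mem_univ, true_and] at h1 h2
        rcases h2.2 with h | h
        · exact h1.1.2.2.1 h
        · exact h1.1.2.2.2 h
      rw [hset, Finset.sum_union hdisj, cancelOut u, add_zero]
    convert congrArg₂ (· - ·) hin hout
  -- now assemble
  unfold SDGraph.P
  have hw' : ∀ v' : G'.V, G'.w v' = G.w v'.val := fun _ => rfl
  have hsum1 : ∑ v' : G'.V, C (G'.w v') * T (G'.Ind v')
      = ∑ v ∈ univ.filter (fun v : G.V => v ≠ vp ∧ v ≠ vm), C (G.w v) * T (G.Ind v) := by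
    rw [Finset.sum_subtype (p := fun v : G.V => v ≠ vp ∧ v ≠ vm)
      (univ.filter (fun v : G.V => v ≠ vp ∧ v ≠ vm)) (by simp)
      (fun v => C (G.w v) * T (G.Ind v))]
    exact Finset.sum_congr rfl (fun v' _ => by rw [hw' v', hIndEq v'])
  have hsum2 : ∑ v' : G'.V, G'.w v'
      = ∑ v ∈ univ.filter (fun v : G.V => v ≠ vp ∧ v ≠ vm), G.w v := by
    rw [Finset.sum_subtype (p := fun v : G.V => v ≠ vp ∧ v ≠ vm)
      (univ.filter (fun v : G.V => v ≠ vp ∧ v ≠ vm)) (by simp) (fun v => G.w v)]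
    rfl
  have hbadset : univ.filter (fun v : G.V => ¬(v ≠ vp ∧ v ≠ vm)) = {vp, vm} := by
    ext v
    simp only [Finset.mem_filter, Finset.mem_univ, true_and, Finset.mem_insert,
      Finset.mem_singleton]
    tauto
  have hsplitV : ∀ f : G.V → LaurentPolynomial ℤ,
      ∑ v : G.V, f v = (∑ v ∈ univ.filter (fun v : G.V => v ≠ vp ∧ v ≠ vm), f v)
        + (f vp + f vm) := by
    intro f
    rw [← Finset.sum_filter_add_sum_filter_not univ (fun v : G.V => v ≠ vp ∧ v ≠ vm) f,
      hbadset, Finset.sum_pair hne]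
  have hsplitVZ : ∀ f : G.V → ℤ,
      ∑ v : G.V, f v = (∑ v ∈ univ.filter (fun v : G.V => v ≠ vp ∧ v ≠ vm), f v)
        + (f vp + f vm) := by
    intro f
    rw [← Finset.sum_filter_add_sum_filter_not univ (fun v : G.V => v ≠ vp ∧ v ≠ vm) f,
      hbadset, Finset.sum_pair hne]
  rw [hsum1, hsum2, hsplitV (fun v => C (G.w v) * T (G.Ind v)), hsplitVZ (fun v => G.w v)]
  rw [hwp, hwm, hInd]
  simp [map_neg]
end

section
/- For each integer k ≥ 0, the writhe polynomial of the virtual knot L_k (whose Gauss diagram consists of one positive chord intersected from one side by k parallel chords, as in Figure 15/16 of the paper) equals t^k + k·t^{−1} − (k+1), computed directly from its Gauss diagram. In particular W_{L_k}(1) = 0 and W_{L_k}'(1) = 0. -/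
open Finset LaurentPolynomial

/-- The Gauss diagram of the virtual knot `L_k`: one chord `c₀ = 0` of sign `+1`,
crossed from left to right by `k` pairwise disjoint chords, each of sign `+1`. -/
def Lk (k : ℕ) : GaussDiagram where
  Chord := Fin (k + 1)
  w _ := 1
  sign _ := Or.inl rfl
  ltr d c := c = 0 ∧ d ≠ 0
  instDecRel := fun _ _ => instDecidableAnd
  irrefl c h := h.2 h.1
  asymm c d h h' := h'.2 h.1

/-- The writhe polynomial of `L_k` equals `t^k + k·t⁻¹ − (k+1)`; in particular it
vanishes at `t = 1` together with its derivative. -/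
theorem writhePolynomial_Lk (k : ℕ) :
    (Lk k).W = T (k : ℤ) + C (k : ℤ) * T (-1) - C ((k : ℤ) + 1) ∧
    evalOne (Lk k).W = 0 ∧ derivOne (Lk k).W = 0 := by
  have hInd0 : (Lk k).Ind (0 : Fin (k+1)) = k := by
    simp [GaussDiagram.Ind, Lk, Finset.filter_ne', Finset.card_erase_of_mem]
    exact (Finset.card_erase_of_mem (Finset.mem_univ _)).trans (by
      show (Finset.univ : Finset (Fin (k+1))).card - 1 = k; simp)
  have hIndS : ∀ c : Fin (k+1), c ≠ 0 → (Lk k).Ind (c : Fin (k+1)) = -1 := by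
    intro c hc
    simp only [GaussDiagram.Ind, Lk]
    have h1 : (univ.filter (fun d : Fin (k+1) => c = 0 ∧ d ≠ 0)) = ∅ := by
      ext d; simp [hc]
    have h2 : (univ.filter (fun d : Fin (k+1) => d = 0 ∧ c ≠ 0)) = {0} := by
      ext d; simp [hc]
    erw [h1, h2]
    simp
  have hW : (Lk k).W = T (k : ℤ) + C (k : ℤ) * T (-1) - C ((k : ℤ) + 1) := by
    show (∑ c : Fin (k+1), C ((Lk k).w c) * T ((Lk k).Ind c))
        - C (∑ c : Fin (k+1), (Lk k).w c) = _
    have hw : ∀ c : Fin (k+1), (Lk k).w c = 1 := fun _ => rfl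
    simp only [hw, map_one, one_mul]
    rw [Fin.sum_univ_succ, hInd0]
    have : ∀ i : Fin k, T ((Lk k).Ind i.succ) = (T (-1 : ℤ) : LaurentPolynomial ℤ) := by
      intro i
      rw [hIndS i.succ (Fin.succ_ne_zero i)]
    rw [Finset.sum_congr rfl (fun i _ => this i)]
    simp only [Finset.sum_const, Finset.card_univ, Fintype.card_fin, nsmul_eq_mul]
    have hcast : ((k : LaurentPolynomial ℤ)) = C (k : ℤ) := by
      rw [← map_natCast (C : ℤ →+* LaurentPolynomial ℤ) k]
    rw [hcast]
    congr 1
    push_cast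
    ring_nf
  refine ⟨hW, ?_, ?_⟩
  · rw [hW]
    have hsingle : (T ((k : ℤ)) + C (k : ℤ) * T (-1) - C ((k : ℤ) + 1)).coeff
        = Finsupp.single (k : ℤ) 1 + Finsupp.single (-1 : ℤ) (k : ℤ)
          - Finsupp.single (0 : ℤ) ((k : ℤ) + 1) := by
      rw [show T ((k : ℤ)) + C (k : ℤ) * T (-1) - C ((k : ℤ) + 1) = AddMonoidAlgebra.single (k : ℤ) 1
        + AddMonoidAlgebra.single (-1 : ℤ) (k : ℤ) - AddMonoidAlgebra.single (0 : ℤ) ((k : ℤ) + 1) by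
          simp [single_eq_C_mul_T]]
      rfl
    unfold evalOne
    rw [hsingle]
    rw [Finsupp.sum_sub_index (by intro a b₁ b₂; rfl),
      Finsupp.sum_add_index' (fun _ => rfl) (fun _ _ _ => rfl),
      Finsupp.sum_single_index rfl, Finsupp.sum_single_index rfl,
      Finsupp.sum_single_index rfl]
    ring
  · rw [hW]
    have hsingle : (T ((k : ℤ)) + C (k : ℤ) * T (-1) - C ((k : ℤ) + 1)).coeff
        = Finsupp.single (k : ℤ) 1 + Finsupp.single (-1 : ℤ) (k : ℤ)
          - Finsupp.single (0 : ℤ) ((k : ℤ) + 1) := by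
      rw [show T ((k : ℤ)) + C (k : ℤ) * T (-1) - C ((k : ℤ) + 1) = AddMonoidAlgebra.single (k : ℤ) 1
        + AddMonoidAlgebra.single (-1 : ℤ) (k : ℤ) - AddMonoidAlgebra.single (0 : ℤ) ((k : ℤ) + 1) by
          simp [single_eq_C_mul_T]]
      rfl
    unfold derivOne
    rw [hsingle]
    rw [Finsupp.sum_sub_index (by intro a b₁ b₂; simp [mul_sub]),
      Finsupp.sum_add_index' (fun n => mul_zero n) (fun n b₁ b₂ => mul_add n b₁ b₂),
      Finsupp.sum_single_index (mul_zero _), Finsupp.sum_single_index (mul_zero _),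
      Finsupp.sum_single_index (mul_zero _)]
    ring
end
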